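/- Let $X_k$, $k \in \mathbb{N}$, be Banach spaces with normalized bases $(e_{(k,j)})_j$, and let $Z = \ell^\infty(X_k)$. Assume the array $(e_{(k,j)})$ is uniformly asymptotically curved. Then for every $z^* \in Z^*$ and every $\eta > 0$ there exists a sequence $(m_k) \subset \mathbb{N}$ such that, setting $W_k = [e_{(k,j)} : j \ge m_k]$ (the closed linear span of the tail of the $k$-th basis), we have $|z^*(w)| \le \eta$ for every $w = (w_k) \in Z$ with $\|w\| \le 1$ and $w_k \in W_k$ for all $k$; equivalently $\|z^*|_{\ell^\infty(W_k : k \in \mathbb{N})}\| \le \eta$. -/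
import Mathlib

open Finset
open scoped ENNReal

/-- `x` is a block sequence of `e`. -/
def IsBlockSequence {V : Type*} [AddCommMonoid V] [Module ℝ V]
    (e : ℕ → V) (x : ℕ → V) : Prop :=
  ∃ (A : ℕ → Finset ℕ) (a : ℕ → ℕ → ℝ),
    (∀ j, x j = ∑ i ∈ A j, a j i • e i) ∧ (∀ j, x j ≠ 0) ∧
    (∀ j, ∀ i ∈ A j, ∀ i' ∈ A (j + 1), i < i')

lemma tail_approx {V : Type*} [NormedAddCommGroup V] [NormedSpace ℝ V]
    (e : ℕ → V) (henorm : ∀ j, ‖e j‖ = 1) (m : ℕ) (v : V)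
    (hv : v ∈ (Submodule.span ℝ (e '' {j | m ≤ j})).topologicalClosure)
    (δ : ℝ) (hδ : 0 < δ) :
    ∃ (A : Finset ℕ) (a : ℕ → ℝ), (∀ i ∈ A, m ≤ i) ∧
      (∑ i ∈ A, a i • e i ≠ 0) ∧ ‖v - ∑ i ∈ A, a i • e i‖ ≤ δ := by
  have hv' : v ∈ closure ((Submodule.span ℝ (e '' {j | m ≤ j}) : Set V)) := by
    rw [← Submodule.topologicalClosure_coe]; exact hv
  obtain ⟨y, hy, hdist⟩ := Metric.mem_closure_iff.mp hv' (δ / 2) (by positivity)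
  rw [dist_eq_norm] at hdist
  obtain ⟨l, hl, hly⟩ := (Finsupp.mem_span_image_iff_linearCombination ℝ).mp hy
  rw [Finsupp.mem_supported] at hl
  have hrep : ∑ i ∈ l.support, l i • e i = y := by
    rw [← hly, Finsupp.linearCombination_apply, Finsupp.sum]
  by_cases hy0 : y = 0
  · refine ⟨{m}, fun _ => δ / 2, by simp, ?_, ?_⟩
    · rw [Finset.sum_singleton]
      intro h
      have := congrArg norm h
      rw [norm_smul, henorm, norm_zero] at this
      simp at this
      nlinarith
    · rw [Finset.sum_singleton]
      calc ‖v - (δ/2) • e m‖ ≤ ‖v - y‖ + ‖y - (δ/2) • e m‖ :=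
            norm_sub_le_norm_sub_add_norm_sub _ _ _
        _ ≤ δ/2 + δ/2 := by
            rw [hy0, zero_sub, norm_neg, norm_smul, henorm]
            rw [Real.norm_of_nonneg (by positivity)]
            have h2 := hdist
            rw [hy0] at h2
            linarith
        _ = δ := by ring
  · refine ⟨l.support, l, fun i hi => hl hi, by rw [hrep]; exact hy0, ?_⟩
    rw [hrep]; linarith

/-- If the array `(e k j)` of normalized bases of the spaces `X k` is uniformly asymptotically
curved, then for every functional `z*` on `Z = ℓ^∞(X_k)` and every `η > 0` there are tails
`W_k = [e_{(k,j)} : j ≥ m_k]` such that `|z*(w)| ≤ η` for every `w` in the unit ball of `Z`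
with `w_k ∈ W_k` for all `k`. -/
theorem functional_small_on_tails_of_uniformly_asymptotically_curved
    (X : ℕ → Type*) [∀ k, NormedAddCommGroup (X k)] [∀ k, NormedSpace ℝ (X k)]
    [∀ k, CompleteSpace (X k)]
    (e : ∀ k, ℕ → X k) (henorm : ∀ k j, ‖e k j‖ = 1)
    (huac : ∀ x : ∀ k, ℕ → X k, (∀ k, IsBlockSequence (e k) (x k)) →
      (∀ k j, ‖x k j‖ ≤ 1) →
      Filter.Tendsto (fun n : ℕ => ⨆ k : ℕ, ‖(1 / (n : ℝ)) • ∑ j ∈ Finset.range n, x k j‖)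
        Filter.atTop (nhds 0))
    (zstar : lp X ∞ →L[ℝ] ℝ) (η : ℝ) (hη : 0 < η) :
    ∃ m : ℕ → ℕ, ∀ w : lp X ∞, ‖w‖ ≤ 1 →
      (∀ k, (w : ∀ k, X k) k ∈
        (Submodule.span ℝ (e k '' {j | m k ≤ j})).topologicalClosure) →
      |zstar w| ≤ η := by
  classical
  by_contra hcon
  push_neg at hcon
  have hsel : ∀ m : ℕ → ℕ, ∃ w : lp X ∞, ‖w‖ ≤ 1 ∧
      (∀ k, (w : ∀ k, X k) k ∈
        (Submodule.span ℝ (e k '' {j | m k ≤ j})).topologicalClosure) ∧ η < zstar w := by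
    intro m
    obtain ⟨w, hw1, hw2, hw3⟩ := hcon m
    rcases le_or_gt 0 (zstar w) with h | h
    · exact ⟨w, hw1, hw2, by rwa [abs_of_nonneg h] at hw3⟩
    · refine ⟨-w, by rw [norm_neg]; exact hw1, fun k => ?_, ?_⟩
      · have hneg : ((-w : lp X ∞) : ∀ k, X k) k = -((w : ∀ k, X k) k) := by
          rw [lp.coeFn_neg]; rfl
        rw [hneg]; exact neg_mem (hw2 k)
      · rw [map_neg]; rw [abs_of_neg h] at hw3; linarith
  choose W hW1 hW2 hW3 using hsel
  set C : ℝ := ‖zstar‖ + 1 with hC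
  have hCpos : 0 < C := by positivity
  set δ : ℝ := min 1 (η / (4 * C)) with hδdef
  have hδpos : 0 < δ := lt_min one_pos (by positivity)
  have hδ1 : δ ≤ 1 := min_le_left _ _
  have hδη : δ ≤ η / (4 * C) := min_le_right _ _
  have h1δ : (0:ℝ) < 1 + δ := by linarith
  choose A a hA hxne hxclose using
    fun (m : ℕ → ℕ) (k : ℕ) =>
      tail_approx (e k) (henorm k) (m k) ((W m : ∀ k, X k) k) (hW2 m k) δ hδpos
  let mseq : ℕ → ℕ → ℕ := fun n => Nat.rec (motive := fun _ => ℕ → ℕ) (fun _ => 0)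
    (fun _ prev k => (A prev k).sup id + 1) n
  have hmseq : ∀ n k, mseq (n + 1) k = (A (mseq n) k).sup id + 1 := fun n k => rfl
  let x : ℕ → ∀ k, X k := fun n k => ∑ i ∈ A (mseq n) k, a (mseq n) k i • e k i
  let xs : ∀ k, ℕ → X k := fun k n => (1 + δ)⁻¹ • x n k
  have hclose : ∀ n k, ‖(W (mseq n) : ∀ k, X k) k - x n k‖ ≤ δ := fun n k =>
    hxclose (mseq n) k
  have hxnorm : ∀ n k, ‖x n k‖ ≤ 1 + δ := by
    intro n k
    have h1 : ‖(W (mseq n) : ∀ k, X k) k‖ ≤ 1 :=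
      le_trans (lp.norm_apply_le_norm (by norm_num) (W (mseq n)) k) (hW1 (mseq n))
    calc ‖x n k‖ = ‖(W (mseq n) : ∀ k, X k) k - ((W (mseq n) : ∀ k, X k) k - x n k)‖ := by
          rw [sub_sub_cancel]
      _ ≤ ‖(W (mseq n) : ∀ k, X k) k‖ + ‖(W (mseq n) : ∀ k, X k) k - x n k‖ := norm_sub_le _ _
      _ ≤ 1 + δ := add_le_add h1 (hclose n k)
  have hxsnorm : ∀ k n, ‖xs k n‖ ≤ 1 := by
    intro k n
    have : ‖xs k n‖ = (1 + δ)⁻¹ * ‖x n k‖ := by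
      show ‖(1 + δ)⁻¹ • x n k‖ = _
      rw [norm_smul, Real.norm_of_nonneg (by positivity)]
    rw [this]
    calc (1 + δ)⁻¹ * ‖x n k‖ ≤ (1 + δ)⁻¹ * (1 + δ) :=
          mul_le_mul_of_nonneg_left (hxnorm n k) (by positivity)
      _ = 1 := inv_mul_cancel₀ (ne_of_gt h1δ)
  have hblock : ∀ k, IsBlockSequence (e k) (xs k) := by
    intro k
    refine ⟨fun n => A (mseq n) k, fun n i => (1 + δ)⁻¹ * a (mseq n) k i, ?_, ?_, ?_⟩
    · intro n
      show (1 + δ)⁻¹ • x n k = _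
      rw [show x n k = ∑ i ∈ A (mseq n) k, a (mseq n) k i • e k i from rfl, Finset.smul_sum]
      exact Finset.sum_congr rfl fun i _ => (smul_smul _ _ _)
    · intro n
      exact smul_ne_zero (inv_ne_zero (ne_of_gt h1δ)) (hxne (mseq n) k)
    · intro n i hi i' hi'
      have h1 : i ≤ (A (mseq n) k).sup id := Finset.le_sup (f := id) hi
      have h2 : mseq (n + 1) k ≤ i' := hA (mseq (n + 1)) k i' hi'
      have h3 := hmseq n k
      omega
  have htend := huac xs hblock hxsnorm
  obtain ⟨N, hN⟩ := Metric.tendsto_atTop.mp htend δ hδpos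
  set n : ℕ := N + 1 with hn
  have hnpos : (0:ℝ) < (n:ℝ) := by positivity
  have havg_le_one : ∀ k, ‖(1 / (n : ℝ)) • ∑ j ∈ Finset.range n, xs k j‖ ≤ 1 := by
    intro k
    have h1 : ‖∑ j ∈ Finset.range n, xs k j‖ ≤ (n : ℝ) := by
      calc ‖∑ j ∈ Finset.range n, xs k j‖ ≤ ∑ j ∈ Finset.range n, ‖xs k j‖ :=
            norm_sum_le _ _
        _ ≤ ∑ _j ∈ Finset.range n, (1:ℝ) := Finset.sum_le_sum fun j _ => hxsnorm k j
        _ = (n : ℝ) := by simp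
    rw [norm_smul, Real.norm_of_nonneg (by positivity), one_div]
    calc (n:ℝ)⁻¹ * ‖∑ j ∈ Finset.range n, xs k j‖ ≤ (n:ℝ)⁻¹ * (n:ℝ) := by
          gcongr
      _ = 1 := inv_mul_cancel₀ (ne_of_gt hnpos)
  have hbdd : BddAbove (Set.range fun k => ‖(1 / (n : ℝ)) • ∑ j ∈ Finset.range n, xs k j‖) :=
    ⟨1, by rintro _ ⟨k, rfl⟩; exact havg_le_one k⟩
  set S : ℝ := ⨆ k : ℕ, ‖(1 / (n : ℝ)) • ∑ j ∈ Finset.range n, xs k j‖ with hSdef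
  have hSn : S ≤ δ := by
    have h := hN n (Nat.le_succ N)
    rw [Real.dist_eq, sub_zero] at h
    exact le_of_lt (lt_of_abs_lt h)
  have hSnonneg : 0 ≤ S := le_trans (norm_nonneg _) (le_ciSup hbdd 0)
  set y : lp X ∞ := (1 / (n : ℝ)) • ∑ j ∈ Finset.range n, W (mseq j) with hy
  have hyapp : ∀ k, (y : ∀ k, X k) k
      = (1 / (n:ℝ)) • ∑ j ∈ Finset.range n, (W (mseq j) : ∀ k, X k) k := by
    intro k
    rw [hy, lp.coeFn_smul, Pi.smul_apply, lp.coeFn_sum, Finset.sum_apply]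
  have hzy : η < zstar y := by
    have heq : zstar y = (1/(n:ℝ)) * ∑ j ∈ Finset.range n, zstar (W (mseq j)) := by
      rw [hy, map_smul, map_sum, smul_eq_mul]
    have hsum : (n : ℝ) * η < ∑ j ∈ Finset.range n, zstar (W (mseq j)) := by
      calc (n:ℝ) * η = ∑ _j ∈ Finset.range n, η := by
            rw [Finset.sum_const, Finset.card_range, nsmul_eq_mul]
        _ < _ := Finset.sum_lt_sum_of_nonempty (by simp [hn]) fun j _ => hW3 (mseq j)
    have := mul_lt_mul_of_pos_left hsum (inv_pos.mpr hnpos)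
    rw [← mul_assoc, inv_mul_cancel₀ (ne_of_gt hnpos), one_mul] at this
    rw [heq, one_div]
    exact this
  have hynorm : ‖y‖ ≤ (1 + δ) * S + δ := by
    apply lp.norm_le_of_forall_le (by positivity)
    intro k
    rw [hyapp k]
    have key : (1 / (n:ℝ)) • ∑ j ∈ Finset.range n, (W (mseq j) : ∀ k, X k) k
        = (1 + δ) • ((1/(n:ℝ)) • ∑ j ∈ Finset.range n, xs k j)
          + (1/(n:ℝ)) • ∑ j ∈ Finset.range n, ((W (mseq j) : ∀ k, X k) k - x j k) := by
      rw [smul_comm ((1:ℝ)+δ), ← smul_add]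
      congr 1
      rw [Finset.smul_sum, ← Finset.sum_add_distrib]
      apply Finset.sum_congr rfl
      intro j _
      have hxx : (1+δ) • xs k j = x j k := smul_inv_smul₀ (ne_of_gt h1δ) (x j k)
      rw [hxx]
      abel
    rw [key]
    have hA1 : ‖(1 + δ) • ((1/(n:ℝ)) • ∑ j ∈ Finset.range n, xs k j)‖ ≤ (1 + δ) * S := by
      rw [norm_smul, Real.norm_of_nonneg h1δ.le]
      exact mul_le_mul_of_nonneg_left (le_ciSup hbdd k) h1δ.le
    have hB : ‖(1/(n:ℝ)) • ∑ j ∈ Finset.range n, ((W (mseq j) : ∀ k, X k) k - x j k)‖ ≤ δ := by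
      rw [norm_smul, Real.norm_of_nonneg (by positivity)]
      have h1 : ‖∑ j ∈ Finset.range n, ((W (mseq j) : ∀ k, X k) k - x j k)‖ ≤ (n:ℝ) * δ := by
        calc ‖∑ j ∈ Finset.range n, ((W (mseq j) : ∀ k, X k) k - x j k)‖
            ≤ ∑ j ∈ Finset.range n, ‖(W (mseq j) : ∀ k, X k) k - x j k‖ := norm_sum_le _ _
          _ ≤ ∑ _j ∈ Finset.range n, δ := Finset.sum_le_sum fun j _ => hclose j k
          _ = (n:ℝ) * δ := by rw [Finset.sum_const, Finset.card_range, nsmul_eq_mul]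
      calc (1/(n:ℝ)) * ‖∑ j ∈ Finset.range n, ((W (mseq j) : ∀ k, X k) k - x j k)‖
          ≤ (1/(n:ℝ)) * ((n:ℝ) * δ) := by gcongr
        _ = δ := by field_simp
    calc ‖(1 + δ) • ((1/(n:ℝ)) • ∑ j ∈ Finset.range n, xs k j)
          + (1/(n:ℝ)) • ∑ j ∈ Finset.range n, ((W (mseq j) : ∀ k, X k) k - x j k)‖
        ≤ ‖(1 + δ) • ((1/(n:ℝ)) • ∑ j ∈ Finset.range n, xs k j)‖
          + ‖(1/(n:ℝ)) • ∑ j ∈ Finset.range n, ((W (mseq j) : ∀ k, X k) k - x j k)‖ :=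
          norm_add_le _ _
      _ ≤ (1 + δ) * S + δ := add_le_add hA1 hB
  have habs : |zstar y| ≤ ‖zstar‖ * ‖y‖ := by
    rw [← Real.norm_eq_abs]
    exact zstar.le_opNorm y
  have hzC : ‖zstar‖ ≤ C := by rw [hC]; linarith
  have hB3 : (1 + δ) * S + δ ≤ 3 * δ := by nlinarith
  have hyn3 : ‖y‖ ≤ 3 * δ := hynorm.trans hB3
  have hfin : zstar y ≤ C * (3 * δ) :=
    calc zstar y ≤ |zstar y| := le_abs_self _
      _ ≤ ‖zstar‖ * ‖y‖ := habs
      _ ≤ C * (3 * δ) := mul_le_mul hzC hyn3 (norm_nonneg y) hCpos.le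
  have hlast : C * (3 * δ) ≤ 3/4 * η := by
    have h4 : δ * (4 * C) ≤ η := (le_div_iff₀ (by positivity)).mp hδη
    nlinarith
  have hcontra : η < 3/4 * η := lt_of_le_of_lt' hlast (lt_of_lt_of_le hzy hfin)
  linarith
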